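/- Let G be a finite additive abelian group containing a t-Sidon family g_0,…,g_{q−1} of q elements, and let q ≥ 2 and N > t ≥ 1 be integers. Then there exists a set B ⊆ S_{q,N} such that d₁(x,y) ≥ t+1 for all distinct x, y ∈ B, and |B| · |G| ≥ |S_{q,N}| = C(N+q−1, q−1). -/
import Mathlib

/-- The discrete simplex `S_{q,N}`: tuples of naturals of length `q` summing to `N`. -/
def simplex (q N : ℕ) : Finset (Fin q → ℕ) := Finset.Nat.antidiagonalTuple q N

/-- The ℓ₁ distance `d₁(x,y) = (1/2) ∑ i, |x i − y i|` on the discrete simplex (the sum of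
absolute differences is even for tuples with equal sums, so division by 2 is exact). -/
def d1 {q : ℕ} (x y : Fin q → ℕ) : ℕ := (∑ i, ((x i : ℤ) - (y i : ℤ)).natAbs) / 2

/-- A family `g : Fin q → G` in an additive abelian group is a `t`-Sidon family if all
`t`-fold sums (with repetition) of its members are distinct: whenever two multiplicity
tuples `e, f` of total weight `t` give equal sums `∑ i, e i • g i = ∑ i, f i • g i`,
we have `e = f`. -/
def IsSidonFamily {G : Type*} [AddCommGroup G] {q : ℕ} (t : ℕ) (g : Fin q → G) : Prop :=
  ∀ e f : Fin q → ℕ, ∑ i, e i = t → ∑ i, f i = t →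
    ∑ i, e i • g i = ∑ i, f i • g i → e = f

lemma card_simplex (q N : ℕ) (hq : 1 ≤ q) :
    (Finset.Nat.antidiagonalTuple q N).card = (N + q - 1).choose (q - 1) := by
  rw [← Finset.piAntidiag_univ_fin_eq_antidiagonalTuple, ← Finset.map_sym_eq_piAntidiag,
    Finset.card_map, Finset.sym_univ, Finset.card_univ, Sym.card_sym_eq_choose, Fintype.card_fin]
  have h1 : q + N - 1 = N + q - 1 := by omega
  have h2 : N + q - 1 - N = q - 1 := by omega
  rw [h1, ← h2, Nat.choose_symm (by omega)]

lemma sidon_key {G : Type*} [AddCommGroup G] {q N t : ℕ} (hq : 2 ≤ q)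
    (g : Fin q → G) (hSidon : IsSidonFamily t g)
    (x y : Fin q → ℕ) (hx : ∑ i, x i = N) (hy : ∑ i, y i = N)
    (hφ : ∑ i, x i • g i = ∑ i, y i • g i) (hd : d1 x y ≤ t) : x = y := by
  haveI : NeZero q := ⟨by omega⟩
  set e : Fin q → ℕ := fun i => x i - y i with he_def
  set f : Fin q → ℕ := fun i => y i - x i with hf_def
  have he : ∀ i, (e i : ℤ) - f i = (x i : ℤ) - y i := by
    intro i; simp only [he_def, hf_def]; omega
  have habs : ∀ i, ((x i : ℤ) - y i).natAbs = e i + f i := by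
    intro i; simp only [he_def, hf_def]; omega
  have hef : ∑ i, e i = ∑ i, f i := by
    have : (∑ i, (e i : ℤ)) - ∑ i, (f i : ℤ) = 0 := by
      rw [← Finset.sum_sub_distrib]
      simp_rw [he]
      rw [Finset.sum_sub_distrib]
      rw [← Nat.cast_sum, ← Nat.cast_sum, hx, hy, sub_self]
    exact_mod_cast sub_eq_zero.mp this
  have hd1 : d1 x y = ∑ i, e i := by
    unfold d1
    simp_rw [habs]
    rw [Finset.sum_add_distrib, ← hef]
    omega
  have hsum : ∑ i, e i • g i = ∑ i, f i • g i := by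
    have : (∑ i, (e i : ℤ) • g i) - ∑ i, (f i : ℤ) • g i = 0 := by
      rw [← Finset.sum_sub_distrib]
      simp_rw [← sub_smul, he, sub_smul]
      rw [Finset.sum_sub_distrib]
      simp_rw [natCast_zsmul]
      rw [hφ, sub_self]
    have h2 := sub_eq_zero.mp this
    simpa [natCast_zsmul] using h2
  set s := ∑ i, e i with hs
  have hst : s ≤ t := by rw [← hd1]; exact hd
  set c := t - s with hc
  set e' : Fin q → ℕ := fun i => e i + if i = 0 then c else 0 with he'
  set f' : Fin q → ℕ := fun i => f i + if i = 0 then c else 0 with hf'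
  have hite : ∑ i : Fin q, (if i = 0 then c else 0) = c := by
    rw [Finset.sum_ite_eq' Finset.univ (0 : Fin q)]; simp
  have hsum_e' : ∑ i, e' i = t := by
    simp only [he', Finset.sum_add_distrib, hite]; omega
  have hsum_f' : ∑ i, f' i = t := by
    simp only [hf', Finset.sum_add_distrib, hite, ← hef]; omega
  have hg' : ∑ i, e' i • g i = ∑ i, f' i • g i := by
    simp only [he', hf', add_smul, Finset.sum_add_distrib, hsum]
  have heq := hSidon e' f' hsum_e' hsum_f' hg'
  have hef2 : e = f := by
    funext i
    have := congrFun heq i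
    simp only [he', hf'] at this
    omega
  funext i
  have h1 := he i
  have h2 : e i = f i := congrFun hef2 i
  omega

/-- if a finite additive abelian group `G` contains a `t`-Sidon family of `q`
elements, and `q ≥ 2`, `N > t ≥ 1`, then there exists an ℓ₁ code `B ⊆ S_{q,N}` with minimum
distance `≥ t + 1` and `|B| · |G| ≥ |S_{q,N}| = C(N+q−1, q−1)`. -/
theorem sidon_gives_large_l1_code {G : Type*} [AddCommGroup G] [Fintype G]
    (q N t : ℕ) (hq : 2 ≤ q) (ht : 1 ≤ t) (htN : t < N)
    (g : Fin q → G) (hSidon : IsSidonFamily t g) :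
    ∃ B : Finset (Fin q → ℕ),
      (∀ x ∈ B, ∑ i, x i = N) ∧
      (∀ x ∈ B, ∀ y ∈ B, x ≠ y → t + 1 ≤ d1 x y) ∧
      Nat.choose (N + q - 1) (q - 1) ≤ B.card * Fintype.card G := by
  classical
  set φ : (Fin q → ℕ) → G := fun x => ∑ i, x i • g i with hφ
  set S := simplex q N with hS
  obtain ⟨b, -, hb⟩ := Finset.exists_max_image (Finset.univ : Finset G)
    (fun b => (S.filter (fun x => φ x = b)).card) ⟨0, Finset.mem_univ 0⟩
  refine ⟨S.filter (fun x => φ x = b), ?_, ?_, ?_⟩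
  · intro x hx
    exact Finset.Nat.mem_antidiagonalTuple.mp (Finset.mem_filter.mp hx).1
  · intro x hx y hy hxy
    by_contra hlt
    apply hxy
    obtain ⟨hxS, hxb⟩ := Finset.mem_filter.mp hx
    obtain ⟨hyS, hyb⟩ := Finset.mem_filter.mp hy
    exact sidon_key hq g hSidon x y (Finset.Nat.mem_antidiagonalTuple.mp hxS)
      (Finset.Nat.mem_antidiagonalTuple.mp hyS) (hxb.trans hyb.symm) (by omega)
  · rw [← card_simplex q N (by omega)]
    have hcard : S.card = ∑ b' : G, (S.filter (fun x => φ x = b')).card :=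
      Finset.card_eq_sum_card_fiberwise (fun x _ => Finset.mem_univ (φ x))
    calc S.card = ∑ b' : G, (S.filter (fun x => φ x = b')).card := hcard
      _ ≤ ∑ _b' : G, (S.filter (fun x => φ x = b)).card :=
          Finset.sum_le_sum (fun b' _ => hb b' (Finset.mem_univ b'))
      _ = Fintype.card G * (S.filter (fun x => φ x = b)).card := by
          rw [Finset.sum_const, Finset.card_univ, smul_eq_mul]
      _ = (S.filter (fun x => φ x = b)).card * Fintype.card G := Nat.mul_comm _ _
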